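/- arXiv:2502.05600 — 6 statements merged into one kernel-verified Lean document; each statement's English description precedes it below -/
import Mathlib

section
/- Let d ≥ 1, let X ⊆ ℝ^d be nonempty, closed and convex, let x₀ ∈ X, x★ ∈ X, r_ε > 0, and let (g_k)_{k≥0} be vectors in ℝ^d with g₀ ≠ 0. Define recursively r̄_k = max(r_ε, max_{j≤k} ‖x_j − x₀‖), G_k = Σ_{i=0}^{k} ‖g_i‖², η_k = r̄_k / √(G_k), and x_{k+1} = Π_X(x_k − η_k g_k). Let s̄_t = max_{k≤t} ‖x_k − x★‖. Then for every t ≥ 1: Σ_{k=0}^{t−1} r̄_k ⟨g_k, x_k − x★⟩ ≤ r̄_t (2 s̄_t + r̄_t) √(G_{t−1}). -/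
open Finset
open scoped RealInnerProductSpace

lemma w_mono_aux (w : ℕ → ℝ) (hw : ∀ k, w k ≤ w (k + 1)) : ∀ m n, m ≤ n → w m ≤ w n := by
  intro m n h
  induction n with
  | zero => simp_all
  | succ p ih =>
    rcases Nat.lt_or_ge m (p + 1) with h' | h'
    · exact (ih (by omega)).trans (hw p)
    · have : m = p + 1 := by omega
      simp [this]

/-- Abel-type summation bound. -/
lemma abel_bound (w c : ℕ → ℝ) (M : ℝ)
    (hw : ∀ k, w k ≤ w (k + 1)) (hw0 : 0 ≤ w 0) :
    ∀ t, 1 ≤ t → (∀ k < t, c k ≤ M) →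
      ∑ k ∈ Finset.range t, w k * (c k - c (k + 1)) ≤ w (t - 1) * M - w (t - 1) * c t := by
  intro t
  induction t with
  | zero => omega
  | succ n ih =>
    intro _ hc
    rcases Nat.eq_zero_or_pos n with h1 | h1
    · subst h1
      rw [Finset.sum_range_one]
      simp only [Nat.add_sub_cancel]
      nlinarith [hc 0 (by omega)]
    · have hn : 1 ≤ n := h1
      have hsub : n + 1 - 1 = n := by omega
      rw [Finset.sum_range_succ, hsub]
      have hih := ih hn (fun k hk => hc k (by omega))
      have hcn : c n ≤ M := hc n (by omega)
      have hwn : w (n - 1) ≤ w n := w_mono_aux w hw _ _ (by omega)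
      have hwn0 : 0 ≤ w n := hw0.trans (w_mono_aux w hw 0 n (by omega))
      nlinarith [mul_le_mul_of_nonneg_left hcn (sub_nonneg.mpr hwn)]

/-- Sum of a_k / √S_k bound where S is the running sum. -/
lemma grad_sum_bound (G : ℕ → ℝ) (a : ℕ → ℝ) (ha : ∀ k, 0 ≤ a k)
    (hG0 : G 0 = a 0) (hGpos : ∀ k, 0 < G k)
    (hGrec : ∀ k, G (k + 1) = G k + a (k + 1)) :
    ∀ t, 1 ≤ t → ∑ k ∈ Finset.range t, a k / Real.sqrt (G k) ≤ 2 * Real.sqrt (G (t - 1)) := by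
  intro t
  induction t with
  | zero => omega
  | succ n ih =>
    intro _
    rcases Nat.eq_zero_or_pos n with h1 | h1
    · subst h1
      rw [Finset.sum_range_one]
      simp only [Nat.add_sub_cancel]
      rw [← hG0, Real.div_sqrt]
      nlinarith [Real.sqrt_nonneg (G 0)]
    · have hsub : n + 1 - 1 = n := by omega
      rw [Finset.sum_range_succ, hsub]
      have hih := ih h1
      have hrec : G n = G (n - 1) + a n := by
        have := hGrec (n - 1); rwa [show n - 1 + 1 = n by omega] at this
      set A := Real.sqrt (G (n - 1)) with hA
      set B := Real.sqrt (G n) with hB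
      have hA2 : A ^ 2 = G (n - 1) := Real.sq_sqrt (hGpos _).le
      have hB2 : B ^ 2 = G n := Real.sq_sqrt (hGpos _).le
      have hBpos : 0 < B := Real.sqrt_pos.mpr (hGpos n)
      have hAnn : 0 ≤ A := Real.sqrt_nonneg _
      have hkey : a n / B ≤ 2 * B - 2 * A := by
        rw [div_le_iff₀ hBpos]
        nlinarith [sq_nonneg (B - A)]
      have hntail : n + 1 - 1 = n := by omega
      calc ∑ k ∈ Finset.range n, a k / Real.sqrt (G k) + a n / B
          ≤ 2 * A + (2 * B - 2 * A) := add_le_add hih hkey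
        _ = 2 * B := by ring

/-- Projection onto a convex set is "nonexpansive toward points of the set". -/
lemma proj_contract {d : ℕ} (X : Set (EuclideanSpace ℝ (Fin d))) (hXconv : Convex ℝ X)
    (proj : EuclideanSpace ℝ (Fin d) → EuclideanSpace ℝ (Fin d))
    (hprojMem : ∀ z, proj z ∈ X)
    (hprojMin : ∀ z, ∀ y ∈ X, ‖z - proj z‖ ≤ ‖z - y‖)
    (z y : EuclideanSpace ℝ (Fin d)) (hy : y ∈ X) : ‖proj z - y‖ ≤ ‖z - y‖ := by
  haveI : Nonempty X := ⟨⟨y, hy⟩⟩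
  have hmin : ‖z - proj z‖ = ⨅ w : X, ‖z - w‖ := by
    apply le_antisymm
    · exact le_ciInf fun w => hprojMin z w w.2
    · have hbdd : BddBelow (Set.range fun w : X => ‖z - (w : EuclideanSpace ℝ (Fin d))‖) := by
        refine ⟨0, ?_⟩
        rintro _ ⟨w, rfl⟩
        exact norm_nonneg _
      exact ciInf_le hbdd ⟨proj z, hprojMem z⟩
  have hinner : ⟪z - proj z, y - proj z⟫ ≤ 0 :=
    (norm_eq_iInf_iff_real_inner_le_zero hXconv (hprojMem z)).mp hmin y hy
  have hexp : ‖z - y‖ ^ 2 = ‖z - proj z‖ ^ 2 - 2 * ⟪z - proj z, y - proj z⟫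
      + ‖y - proj z‖ ^ 2 := by
    have := norm_sub_sq_real (z - proj z) (y - proj z)
    rw [show (z - proj z) - (y - proj z) = z - y by abel] at this
    exact this
  have h2 : ‖proj z - y‖ ^ 2 ≤ ‖z - y‖ ^ 2 := by
    rw [show proj z - y = -(y - proj z) by abel, norm_neg]
    nlinarith [norm_nonneg (z - proj z)]
  have := Real.sqrt_le_sqrt h2
  rwa [Real.sqrt_sq (norm_nonneg _), Real.sqrt_sq (norm_nonneg _)] at this

theorem stmt3 (d : ℕ) (hd : 1 ≤ d)
    (X : Set (EuclideanSpace ℝ (Fin d))) (hXne : X.Nonempty) (hXcl : IsClosed X)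
    (hXconv : Convex ℝ X)
    -- `proj` is the Euclidean metric projection onto `X`
    (proj : EuclideanSpace ℝ (Fin d) → EuclideanSpace ℝ (Fin d))
    (hprojMem : ∀ z, proj z ∈ X)
    (hprojMin : ∀ z, ∀ y ∈ X, ‖z - proj z‖ ≤ ‖z - y‖)
    (x : ℕ → EuclideanSpace ℝ (Fin d)) (xstar : EuclideanSpace ℝ (Fin d))
    (hx0 : x 0 ∈ X) (hxstar : xstar ∈ X)
    (reps : ℝ) (hreps : 0 < reps)
    (g : ℕ → EuclideanSpace ℝ (Fin d)) (hg0 : g 0 ≠ 0)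
    (rbar : ℕ → ℝ)
    (hrbar : ∀ k, rbar k = max reps ((Finset.range (k + 1)).sup' Finset.nonempty_range_add_one
      fun j => ‖x j - x 0‖))
    (G : ℕ → ℝ) (hG : ∀ k, G k = ∑ i ∈ Finset.range (k + 1), ‖g i‖ ^ 2)
    (η : ℕ → ℝ) (hη : ∀ k, η k = rbar k / Real.sqrt (G k))
    (hrec : ∀ k, x (k + 1) = proj (x k - η k • g k))
    (sbar : ℕ → ℝ)
    (hsbar : ∀ k, sbar k = (Finset.range (k + 1)).sup' Finset.nonempty_range_add_one
      fun j => ‖x j - xstar‖)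
    (t : ℕ) (ht : 1 ≤ t) :
    ∑ k ∈ Finset.range t, rbar k * ⟪g k, x k - xstar⟫ ≤
      rbar t * (2 * sbar t + rbar t) * Real.sqrt (G (t - 1)) := by
  -- basic positivity facts
  have hGpos : ∀ k, 0 < G k := by
    intro k
    rw [hG k]
    have h0 : (0:ℝ) < ‖g 0‖ ^ 2 := by
      have : 0 < ‖g 0‖ := norm_pos_iff.mpr hg0
      positivity
    have hle : ‖g 0‖ ^ 2 ≤ ∑ i ∈ Finset.range (k + 1), ‖g i‖ ^ 2 :=
      Finset.single_le_sum (f := fun i => ‖g i‖ ^ 2) (fun i _ => by positivity)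
        (Finset.mem_range.mpr (by omega))
    linarith
  have hsq : ∀ k, (0:ℝ) < Real.sqrt (G k) := fun k => Real.sqrt_pos.mpr (hGpos k)
  have hGmono : ∀ k, G k ≤ G (k + 1) := by
    intro k
    rw [hG k, hG (k + 1), Finset.sum_range_succ _ (k + 1)]
    nlinarith [sq_nonneg ‖g (k + 1)‖]
  have hwmono : ∀ k, Real.sqrt (G k) ≤ Real.sqrt (G (k + 1)) :=
    fun k => Real.sqrt_le_sqrt (hGmono k)
  have hrmono : ∀ k, rbar k ≤ rbar (k + 1) := by
    intro k
    rw [hrbar k, hrbar (k + 1)]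
    exact max_le_max le_rfl
      (Finset.sup'_mono _ (Finset.range_subset_range.mpr (by omega)) _)
  have hrle : ∀ j k, j ≤ k → rbar j ≤ rbar k := w_mono_aux rbar hrmono
  have hrpos : ∀ k, 0 < rbar k := by
    intro k
    rw [hrbar k]
    exact lt_of_lt_of_le hreps (le_max_left _ _)
  have hxx0 : ∀ j k, j ≤ k → ‖x j - x 0‖ ≤ rbar k := by
    intro j k hjk
    rw [hrbar k]
    exact le_trans (Finset.le_sup' (fun j => ‖x j - x 0‖)
      (Finset.mem_range.mpr (Nat.lt_succ_of_le hjk))) (le_max_right _ _)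
  have hsb : ∀ j k, j ≤ k → ‖x j - xstar‖ ≤ sbar k := by
    intro j k hjk
    rw [hsbar k]
    exact Finset.le_sup' (fun j => ‖x j - xstar‖)
      (Finset.mem_range.mpr (Nat.lt_succ_of_le hjk))
  have hsnn : 0 ≤ sbar t := le_trans (norm_nonneg _) (hsb 0 t (by omega))
  -- the per-step descent inequality
  have hstep : ∀ k, ‖x (k + 1) - xstar‖ ^ 2 ≤
      ‖x k - xstar‖ ^ 2 - 2 * (η k * ⟪g k, x k - xstar⟫) + η k ^ 2 * ‖g k‖ ^ 2 := by
    intro k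
    have h1 : ‖x (k + 1) - xstar‖ ≤ ‖(x k - η k • g k) - xstar‖ := by
      rw [hrec k]
      exact proj_contract X hXconv proj hprojMem hprojMin _ _ hxstar
    have h2 : ‖(x k - η k • g k) - xstar‖ ^ 2 =
        ‖x k - xstar‖ ^ 2 - 2 * (η k * ⟪g k, x k - xstar⟫) + η k ^ 2 * ‖g k‖ ^ 2 := by
      have hns := norm_sub_sq_real (x k - xstar) (η k • g k)
      rw [show (x k - xstar) - η k • g k = (x k - η k • g k) - xstar by abel] at hns
      rw [hns, real_inner_smul_right, real_inner_comm, norm_smul, Real.norm_eq_abs,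
        mul_pow, sq_abs]
    calc ‖x (k + 1) - xstar‖ ^ 2 ≤ ‖(x k - η k • g k) - xstar‖ ^ 2 :=
          pow_le_pow_left₀ (norm_nonneg _) h1 2
      _ = _ := h2
  -- the key per-step inequality with weights
  have hkey : ∀ k, rbar k * ⟪g k, x k - xstar⟫ ≤
      Real.sqrt (G k) * (‖x k - xstar‖ ^ 2 - ‖x (k + 1) - xstar‖ ^ 2) / 2
      + rbar k ^ 2 * (‖g k‖ ^ 2 / Real.sqrt (G k)) / 2 := by
    intro k
    have H := hstep k
    have hs : (0:ℝ) < Real.sqrt (G k) := hsq k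
    have hs2 : Real.sqrt (G k) ^ 2 = G k := Real.sq_sqrt (hGpos k).le
    have hsne : Real.sqrt (G k) ≠ 0 := ne_of_gt hs
    have hq : rbar k = η k * Real.sqrt (G k) := by
      rw [hη k]; field_simp
    have h2s : 2 * Real.sqrt (G k) * (rbar k * ⟪g k, x k - xstar⟫) ≤
        Real.sqrt (G k) * (Real.sqrt (G k) * (‖x k - xstar‖ ^ 2 - ‖x (k + 1) - xstar‖ ^ 2))
        + rbar k ^ 2 * ‖g k‖ ^ 2 := by
      rw [hq]
      nlinarith [mul_le_mul_of_nonneg_left H (mul_pos hs hs).le]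
    rw [← sub_nonneg]
    have hrw : Real.sqrt (G k) * (‖x k - xstar‖ ^ 2 - ‖x (k + 1) - xstar‖ ^ 2) / 2
        + rbar k ^ 2 * (‖g k‖ ^ 2 / Real.sqrt (G k)) / 2 - rbar k * ⟪g k, x k - xstar⟫
        = (Real.sqrt (G k) * (Real.sqrt (G k) * (‖x k - xstar‖ ^ 2 - ‖x (k + 1) - xstar‖ ^ 2))
          + rbar k ^ 2 * ‖g k‖ ^ 2
          - 2 * Real.sqrt (G k) * (rbar k * ⟪g k, x k - xstar⟫)) / (2 * Real.sqrt (G k)) := by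
      field_simp
    rw [hrw]
    exact div_nonneg (by linarith) (by positivity)
  -- split the sum
  set c : ℕ → ℝ := fun k => ‖x k - xstar‖ ^ 2 - ‖x t - xstar‖ ^ 2 with hcdef
  have hcdiff : ∀ k, ‖x k - xstar‖ ^ 2 - ‖x (k + 1) - xstar‖ ^ 2 = c k - c (k + 1) := by
    intro k; simp only [hcdef]; ring
  have hsum1 : ∑ k ∈ Finset.range t, rbar k * ⟪g k, x k - xstar⟫ ≤
      (∑ k ∈ Finset.range t, Real.sqrt (G k) * (c k - c (k + 1))) / 2
      + (∑ k ∈ Finset.range t, rbar k ^ 2 * (‖g k‖ ^ 2 / Real.sqrt (G k))) / 2 := by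
    rw [Finset.sum_div, Finset.sum_div, ← Finset.sum_add_distrib]
    refine Finset.sum_le_sum fun k _ => ?_
    have := hkey k
    rw [hcdiff k] at this
    exact this
  -- part A : Abel summation bound
  have hM : ∀ k, k < t → c k ≤ 4 * rbar t * sbar t := by
    intro k hk
    have hbk : ‖x k - xstar‖ ≤ sbar t := hsb k t (by omega)
    have hbt : ‖x t - xstar‖ ≤ sbar t := hsb t t le_rfl
    have habs := abs_norm_sub_norm_le (x k - xstar) (x t - xstar)
    rw [show (x k - xstar) - (x t - xstar) = x k - x t by abel] at habs
    have hxt : ‖x k - x t‖ ≤ 2 * rbar t := by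
      have : ‖x k - x t‖ ≤ ‖x k - x 0‖ + ‖x t - x 0‖ := by
        have := norm_sub_le (x k - x 0) (x t - x 0)
        rwa [show (x k - x 0) - (x t - x 0) = x k - x t by abel] at this
      linarith [hxx0 k t (by omega), hxx0 t t le_rfl]
    have h1 : ‖x k - xstar‖ - ‖x t - xstar‖ ≤ 2 * rbar t :=
      le_trans (le_abs_self _) (habs.trans hxt)
    simp only [hcdef]
    nlinarith [mul_le_mul_of_nonneg_right h1
        (by positivity : (0:ℝ) ≤ ‖x k - xstar‖ + ‖x t - xstar‖),
      hrpos t, norm_nonneg (x k - xstar), norm_nonneg (x t - xstar)]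
  have hct : c t = 0 := by simp [hcdef]
  have hA : ∑ k ∈ Finset.range t, Real.sqrt (G k) * (c k - c (k + 1)) ≤
      Real.sqrt (G (t - 1)) * (4 * rbar t * sbar t) := by
    have := abel_bound (fun k => Real.sqrt (G k)) c (4 * rbar t * sbar t)
      hwmono (Real.sqrt_nonneg _) t ht hM
    rw [hct] at this
    simpa using this
  -- part B : adaptive stepsize sum bound
  have hB : ∑ k ∈ Finset.range t, rbar k ^ 2 * (‖g k‖ ^ 2 / Real.sqrt (G k)) ≤
      rbar t ^ 2 * (2 * Real.sqrt (G (t - 1))) := by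
    have hB1 : ∑ k ∈ Finset.range t, rbar k ^ 2 * (‖g k‖ ^ 2 / Real.sqrt (G k)) ≤
        ∑ k ∈ Finset.range t, rbar t ^ 2 * (‖g k‖ ^ 2 / Real.sqrt (G k)) := by
      refine Finset.sum_le_sum fun k hk => ?_
      have hk' : k ≤ t := (Finset.mem_range.mp hk).le
      have h1 : rbar k ^ 2 ≤ rbar t ^ 2 := by
        have := hrle k t hk'
        nlinarith [hrpos k]
      have h2 : (0:ℝ) ≤ ‖g k‖ ^ 2 / Real.sqrt (G k) := by positivity
      exact mul_le_mul_of_nonneg_right h1 h2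
    have hB2 : ∑ k ∈ Finset.range t, ‖g k‖ ^ 2 / Real.sqrt (G k) ≤
        2 * Real.sqrt (G (t - 1)) := by
      refine grad_sum_bound G (fun k => ‖g k‖ ^ 2) (fun k => by positivity) ?_ hGpos ?_ t ht
      · rw [hG 0]; simp
      · intro k; rw [hG k, hG (k + 1), Finset.sum_range_succ]
    calc ∑ k ∈ Finset.range t, rbar k ^ 2 * (‖g k‖ ^ 2 / Real.sqrt (G k))
        ≤ rbar t ^ 2 * ∑ k ∈ Finset.range t, ‖g k‖ ^ 2 / Real.sqrt (G k) := by
          rw [Finset.mul_sum]; exact hB1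
      _ ≤ rbar t ^ 2 * (2 * Real.sqrt (G (t - 1))) := by
          have : (0:ℝ) ≤ rbar t ^ 2 := by positivity
          exact mul_le_mul_of_nonneg_left hB2 this
  -- combine
  have hfinal := hsum1
  have hG1 : (0:ℝ) ≤ Real.sqrt (G (t - 1)) := Real.sqrt_nonneg _
  nlinarith [hA, hB, hfinal]
end

section
/- Let d ≥ 1, L ≥ 0, let f : ℝ^d → ℝ be convex and L-Lipschitz with respect to the Euclidean norm, let x★ ∈ ℝ^d, t ≥ 1, let x₀, …, x_{t−1} ∈ ℝ^d, let r̄₀, …, r̄_{t−1} be positive reals, let μ₀, …, μ_{t−1} be positive reals, and set x̄_t = (Σ_{k=0}^{t−1} r̄_k)^{−1} Σ_{k=0}^{t−1} r̄_k x_k. Then f(x̄_t) − f(x★) ≤ (Σ_{k=0}^{t−1} r̄_k)^{−1} Σ_{k=0}^{t−1} r̄_k ( ⟨∇f_{μ_k}(x_k), x_k − x★⟩ + 2 L μ_k ). -/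
open MeasureTheory Metric Finset
open scoped RealInnerProductSpace

/-- The uniform probability measure on the closed Euclidean unit ball in `ℝ^d`. -/
noncomputable def ballUniform (d : ℕ) : Measure (EuclideanSpace ℝ (Fin d)) :=
  (volume (Metric.closedBall (0 : EuclideanSpace ℝ (Fin d)) 1))⁻¹ •
    volume.restrict (Metric.closedBall 0 1)

/-- The ball-smoothed function `f_μ(x) = E_{u ∼ U(B^d)} [f (x + μ u)]`. -/
noncomputable def smoothed (d : ℕ) (f : EuclideanSpace ℝ (Fin d) → ℝ) (μ : ℝ)
    (x : EuclideanSpace ℝ (Fin d)) : ℝ :=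
  ∫ u, f (x + μ • u) ∂(ballUniform d)

/-- The uniform (rotation-invariant) probability measure on the unit sphere `S^{d-1}`,
realized as the pushforward of the uniform measure on the unit ball under radial
normalization `u ↦ u / ‖u‖`. -/
noncomputable def sphereUniform (d : ℕ) : Measure (EuclideanSpace ℝ (Fin d)) :=
  (ballUniform d).map (fun u => ‖u‖⁻¹ • u)

section aux
variable {d : ℕ}

lemma vb_ne_zero : volume (closedBall (0 : EuclideanSpace ℝ (Fin d)) 1) ≠ 0 :=
  (measure_closedBall_pos volume 0 one_pos).ne'

lemma vb_ne_top : volume (closedBall (0 : EuclideanSpace ℝ (Fin d)) 1) ≠ ⊤ :=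
  measure_closedBall_lt_top.ne

instance : IsProbabilityMeasure (ballUniform d) := by
  constructor
  rw [ballUniform, Measure.smul_apply, Measure.restrict_apply MeasurableSet.univ,
    Set.univ_inter, smul_eq_mul, ENNReal.inv_mul_cancel vb_ne_zero vb_ne_top]

lemma ballUniform_ac : ballUniform d ≪ (volume : Measure (EuclideanSpace ℝ (Fin d))) :=
  Measure.smul_absolutelyContinuous.trans
    (Measure.absolutelyContinuous_of_le Measure.restrict_le_self)

lemma ballUniform_ae_mem :
    ∀ᵐ u ∂(ballUniform d), u ∈ closedBall (0 : EuclideanSpace ℝ (Fin d)) 1 := by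
  rw [ballUniform]; refine Measure.ae_smul_measure ?_ _
  exact ae_restrict_mem measurableSet_closedBall

lemma integrable_shift {f : EuclideanSpace ℝ (Fin d) → ℝ} (hf : Continuous f)
    (x : EuclideanSpace ℝ (Fin d)) (c : ℝ) :
    Integrable (fun u => f (x + c • u)) (ballUniform d) := by
  rw [ballUniform]
  refine Integrable.smul_measure ?_ (by simp [vb_ne_zero])
  exact ((hf.comp (continuous_const.add (continuous_const_smul c)))).continuousOn.integrableOn_compact
    (isCompact_closedBall 0 1)

variable {L : ℝ} {f : EuclideanSpace ℝ (Fin d) → ℝ}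

lemma lipschitz_of_hlip (hL : 0 ≤ L) (hlip : ∀ x y, |f x - f y| ≤ L * ‖x - y‖) :
    LipschitzWith (Real.toNNReal L) f := by
  apply LipschitzWith.of_dist_le_mul
  intro x y
  rw [Real.coe_toNNReal _ hL, Real.dist_eq]
  simpa [dist_eq_norm] using hlip x y

lemma abs_smoothed_sub (hL : 0 ≤ L) (hlip : ∀ x y, |f x - f y| ≤ L * ‖x - y‖)
    {μ : ℝ} (hμ : 0 ≤ μ) (x : EuclideanSpace ℝ (Fin d)) :
    |smoothed d f μ x - f x| ≤ L * μ := by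
  have hcont : Continuous f := (lipschitz_of_hlip hL hlip).continuous
  have h1 : Integrable (fun u => f (x + μ • u)) (ballUniform d) := integrable_shift hcont x μ
  have : smoothed d f μ x - f x = ∫ u, (f (x + μ • u) - f x) ∂(ballUniform d) := by
    rw [integral_sub h1 (integrable_const _), integral_const, probReal_univ, smoothed]
    simp
  rw [this]
  calc |∫ u, (f (x + μ • u) - f x) ∂(ballUniform d)|
      ≤ (L * μ) * ((ballUniform d) Set.univ).toReal := by
        rw [← Real.norm_eq_abs]
        apply norm_integral_le_of_norm_le_const
        filter_upwards [ballUniform_ae_mem] with u hu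
        rw [Real.norm_eq_abs]
        calc |f (x + μ • u) - f x| ≤ L * ‖x + μ • u - x‖ := hlip _ _
          _ = L * (μ * ‖u‖) := by rw [add_sub_cancel_left, norm_smul, Real.norm_eq_abs,
              abs_of_nonneg hμ]
          _ ≤ L * (μ * 1) := by
              have := mem_closedBall_zero_iff.1 hu
              gcongr
          _ = L * μ := by ring
    _ = L * μ := by simp

lemma smoothed_convexOn (hconv : ConvexOn ℝ Set.univ f) (hcont : Continuous f) (μ : ℝ) :
    ConvexOn ℝ Set.univ (smoothed d f μ) := by
  refine ⟨convex_univ, fun x _ y _ a b ha hb hab => ?_⟩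
  have key : ∀ u : EuclideanSpace ℝ (Fin d),
      f (a • x + b • y + μ • u) ≤ a * f (x + μ • u) + b * f (y + μ • u) := by
    intro u
    have : a • x + b • y + μ • u = a • (x + μ • u) + b • (y + μ • u) := by
      have : a • (x + μ • u) + b • (y + μ • u)
          = a • x + b • y + (a + b) • (μ • u) := by module
      rw [this, hab, one_smul]
    rw [this]
    exact hconv.2 (Set.mem_univ _) (Set.mem_univ _) ha hb hab
  have h1 := integrable_shift hcont x μ
  have h2 := integrable_shift hcont y μ
  have h3 := integrable_shift hcont (a • x + b • y) μ
  calc smoothed d f μ (a • x + b • y)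
      ≤ ∫ u, (a * f (x + μ • u) + b * f (y + μ • u)) ∂(ballUniform d) := by
        exact integral_mono h3 ((h1.const_mul a).add (h2.const_mul b)) key
    _ = a * smoothed d f μ x + b * smoothed d f μ y := by
        rw [integral_add (h1.const_mul a) (h2.const_mul b), integral_const_mul, integral_const_mul]
        rfl

/-- Gradient inequality for convex functions. -/
lemma convex_fderiv_ineq {g : EuclideanSpace ℝ (Fin d) → ℝ} (hg : ConvexOn ℝ Set.univ g)
    {x y : EuclideanSpace ℝ (Fin d)} {φ : EuclideanSpace ℝ (Fin d) →L[ℝ] ℝ}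
    (hfd : HasFDerivAt g φ x) : g x + φ (y - x) ≤ g y := by
  set v := y - x with hv
  have hline : HasDerivAt (fun s : ℝ => g (x + s • v)) (φ v) 0 := by
    have h1 : HasDerivAt (fun s : ℝ => x + s • v) v 0 := by
      simpa using ((hasDerivAt_id (0 : ℝ)).smul_const v).const_add x
    have h2 : HasFDerivAt g φ (x + (0 : ℝ) • v) := by simpa using hfd
    exact h2.comp_hasDerivAt 0 h1
  have htend : Filter.Tendsto (slope (fun s : ℝ => g (x + s • v)) 0)
      (nhdsWithin 0 (Set.Ioi 0)) (nhds (φ v)) :=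
    (hasDerivAt_iff_tendsto_slope.1 hline).mono_left
      (nhdsWithin_mono 0 fun s hs => ne_of_gt hs)
  have hbound : ∀ᶠ s in nhdsWithin (0:ℝ) (Set.Ioi 0),
      slope (fun s : ℝ => g (x + s • v)) 0 s ≤ g y - g x := by
    filter_upwards [Ioc_mem_nhdsGT_of_mem (Set.left_mem_Ico.2 one_pos)] with s hs
    obtain ⟨hs0, hs1⟩ := hs
    have hcomb : x + s • v = (1 - s) • x + s • y := by
      rw [hv]; module
    have hcvx : g (x + s • v) ≤ (1 - s) * g x + s * g y := by
      rw [hcomb]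
      exact hg.2 (Set.mem_univ _) (Set.mem_univ _) (by linarith) (le_of_lt hs0) (by ring)
    rw [slope_def_field]
    simp only [zero_smul, add_zero, sub_zero]
    rw [div_le_iff₀ hs0]
    nlinarith
  have : φ v ≤ g y - g x :=
    le_of_tendsto htend hbound
  linarith

lemma smoothed_hasFDerivAt (hL : 0 ≤ L) (hlip : ∀ x y, |f x - f y| ≤ L * ‖x - y‖)
    {μ : ℝ} (hμ : 0 < μ) (x₀ : EuclideanSpace ℝ (Fin d)) :
    HasFDerivAt (smoothed d f μ)
      (∫ u, fderiv ℝ f (x₀ + μ • u) ∂(ballUniform d)) x₀ := by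
  have hlw := lipschitz_of_hlip hL hlip
  have hcont : Continuous f := hlw.continuous
  have main := hasFDerivAt_integral_of_dominated_loc_of_lip
    (F := fun x u => f (x + μ • u)) (F' := fun u => fderiv ℝ f (x₀ + μ • u))
    (μ := ballUniform d) (x₀ := x₀) (bound := fun _ => L)
    (s := ball x₀ 1) (ball_mem_nhds x₀ one_pos)
    (Filter.Eventually.of_forall fun x => (integrable_shift hcont x μ).aestronglyMeasurable)
    (integrable_shift hcont x₀ μ)
    (((measurable_fderiv ℝ f).comp
      ((measurable_id.const_smul μ).const_add x₀)).aestronglyMeasurable)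
    ?lip (integrable_const L) ?diff
  · exact main.2
  case lip =>
    refine Filter.Eventually.of_forall fun u => ?_
    have key : LipschitzWith (Real.nnabs L) (fun x => f (x + μ • u)) := by
      apply LipschitzWith.of_dist_le_mul
      intro a b
      rw [Real.dist_eq]
      calc |f (a + μ • u) - f (b + μ • u)| ≤ L * ‖a + μ • u - (b + μ • u)‖ := hlip _ _
        _ = (Real.nnabs L : ℝ) * dist a b := by
            rw [dist_eq_norm, add_sub_add_right_eq_sub, Real.coe_nnabs, abs_of_nonneg hL]
    exact key.lipschitzOnWith
  case diff =>
    have hrad : ∀ᵐ y ∂(volume : Measure (EuclideanSpace ℝ (Fin d))),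
        DifferentiableAt ℝ f y := hlw.ae_differentiableAt
    set N : Set (EuclideanSpace ℝ (Fin d)) := {y | ¬ DifferentiableAt ℝ f y} with hN
    have hNnull : volume N = 0 := hrad
    have hTnull : volume ((fun u : EuclideanSpace ℝ (Fin d) => x₀ + μ • u) ⁻¹' N) = 0 := by
      have : (fun u : EuclideanSpace ℝ (Fin d) => x₀ + μ • u) ⁻¹' N
          = (fun u : EuclideanSpace ℝ (Fin d) => μ • u) ⁻¹' ((fun v => x₀ + v) ⁻¹' N) := rfl
      rw [this, Measure.addHaar_preimage_smul volume (ne_of_gt hμ),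
        measure_preimage_add volume x₀ N, hNnull, mul_zero]
    have hae : ∀ᵐ u ∂(ballUniform d), DifferentiableAt ℝ f (x₀ + μ • u) := by
      have := ballUniform_ac hTnull
      exact this
    filter_upwards [hae] with u hu
    have h1 : HasFDerivAt (fun x : EuclideanSpace ℝ (Fin d) => x + μ • u)
        (ContinuousLinearMap.id ℝ _) x₀ := (hasFDerivAt_id x₀).add_const (μ • u)
    have h2 : HasFDerivAt f (fderiv ℝ f (x₀ + μ • u)) (x₀ + μ • u) := hu.hasFDerivAt
    simpa [Function.comp_def] using h2.comp x₀ h1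

lemma key_ineq (hconv : ConvexOn ℝ Set.univ f) (hL : 0 ≤ L)
    (hlip : ∀ x y, |f x - f y| ≤ L * ‖x - y‖) {μ : ℝ} (hμ : 0 < μ)
    (xk xs : EuclideanSpace ℝ (Fin d)) :
    f xk - f xs ≤ ⟪gradient (smoothed d f μ) xk, xk - xs⟫ + 2 * L * μ := by
  have hcont : Continuous f := (lipschitz_of_hlip hL hlip).continuous
  have hfd := smoothed_hasFDerivAt hL hlip hμ xk
  have hgrad : HasGradientAt (smoothed d f μ) (gradient (smoothed d f μ) xk) xk :=
    hfd.differentiableAt.hasGradientAt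
  have hfd2 : HasFDerivAt (smoothed d f μ)
      (InnerProductSpace.toDual ℝ _ (gradient (smoothed d f μ) xk)) xk := hgrad.hasFDerivAt
  have hineq := convex_fderiv_ineq (smoothed_convexOn hconv hcont μ) (y := xs) hfd2
  rw [InnerProductSpace.toDual_apply_apply,
    show xs - xk = -(xk - xs) by abel, inner_neg_right] at hineq
  have h1 := abs_le.1 (abs_smoothed_sub hL hlip hμ.le xk)
  have h2 := abs_le.1 (abs_smoothed_sub hL hlip hμ.le xs)
  linarith [h1.1, h1.2, h2.1, h2.2, hineq]

end aux

theorem stmt8 (d : ℕ) (hd : 1 ≤ d) (L : ℝ) (hL : 0 ≤ L)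
    (f : EuclideanSpace ℝ (Fin d) → ℝ)
    (hconv : ConvexOn ℝ Set.univ f)
    (hlip : ∀ x y, |f x - f y| ≤ L * ‖x - y‖)
    (xstar : EuclideanSpace ℝ (Fin d)) (t : ℕ) (ht : 1 ≤ t)
    (x : ℕ → EuclideanSpace ℝ (Fin d))
    (rbar : ℕ → ℝ) (hr : ∀ k, 0 < rbar k)
    (μ : ℕ → ℝ) (hμ : ∀ k, 0 < μ k)
    (xbar : EuclideanSpace ℝ (Fin d))
    (hxbar : xbar = (∑ k ∈ Finset.range t, rbar k)⁻¹ •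
      ∑ k ∈ Finset.range t, rbar k • x k) :
    f xbar - f xstar ≤ (∑ k ∈ Finset.range t, rbar k)⁻¹ *
      ∑ k ∈ Finset.range t, rbar k *
        (⟪gradient (smoothed d f (μ k)) (x k), x k - xstar⟫ + 2 * L * μ k) := by
  set S := ∑ k ∈ Finset.range t, rbar k with hS
  have hSpos : 0 < S := Finset.sum_pos (fun k _ => hr k)
    (Finset.nonempty_range_iff.2 (by omega))
  have hjen : f xbar ≤ S⁻¹ * ∑ k ∈ Finset.range t, rbar k * f (x k) := by
    have h := hconv.map_centerMass_le (t := Finset.range t) (w := rbar) (p := x)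
      (fun i _ => (hr i).le) (by rwa [← hS]) (fun i _ => Set.mem_univ _)
    have hx : xbar = (Finset.range t).centerMass rbar x := by
      rw [hxbar, Finset.centerMass]
    rw [← hx] at h
    simpa [Finset.centerMass, smul_eq_mul, Function.comp] using h
  have hterm : ∀ k ∈ Finset.range t, rbar k * (f (x k) - f xstar)
      ≤ rbar k * (⟪gradient (smoothed d f (μ k)) (x k), x k - xstar⟫ + 2 * L * μ k) :=
    fun k _ => mul_le_mul_of_nonneg_left
      (key_ineq hconv hL hlip (hμ k) (x k) xstar) (hr k).le
  have hsum := Finset.sum_le_sum hterm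
  have heq : ∑ k ∈ Finset.range t, rbar k * (f (x k) - f xstar)
      = (∑ k ∈ Finset.range t, rbar k * f (x k)) - S * f xstar := by
    rw [hS, Finset.sum_mul, ← Finset.sum_sub_distrib]
    exact Finset.sum_congr rfl fun k _ => by ring
  calc f xbar - f xstar ≤ S⁻¹ * (∑ k ∈ Finset.range t, rbar k * f (x k)) - f xstar := by
        linarith
    _ = S⁻¹ * ∑ k ∈ Finset.range t, rbar k * (f (x k) - f xstar) := by
        rw [heq, mul_sub, ← mul_assoc, inv_mul_cancel₀ hSpos.ne', one_mul]
    _ ≤ S⁻¹ * ∑ k ∈ Finset.range t, rbar k *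
        (⟪gradient (smoothed d f (μ k)) (x k), x k - xstar⟫ + 2 * L * μ k) :=
        mul_le_mul_of_nonneg_left hsum (inv_nonneg.2 hSpos.le)
end

section
/- Let a₀, a₁, …, a_T be a positive nondecreasing sequence of real numbers with T ≥ 1. Then max_{1 ≤ t ≤ T} Σ_{i=0}^{t−1} (a_i / a_t) ≥ (1/e) ( T / log_+(a_T / a₀) − 1 ). -/
open Finset

theorem stmt10 (T : ℕ) (hT : 1 ≤ T) (a : ℕ → ℝ)
    (hpos : ∀ i ≤ T, 0 < a i)
    (hmono : ∀ i j, i ≤ j → j ≤ T → a i ≤ a j) :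
    (1 / Real.exp 1) * ((T : ℝ) / (Real.log (a T / a 0) + 1) - 1) ≤
      (Finset.Icc 1 T).sup' (Finset.nonempty_Icc.mpr hT)
        (fun t => ∑ i ∈ Finset.range t, a i / a t) := by
  set L := Real.log (a T / a 0) with hLdef
  have ha0 : 0 < a 0 := hpos 0 (Nat.zero_le T)
  have haT : 0 < a T := hpos T le_rfl
  have hL0 : 0 ≤ L := Real.log_nonneg (by
    rw [le_div_iff₀ ha0]; simpa using hmono 0 T (Nat.zero_le T) le_rfl)
  have hL1 : (0:ℝ) < L + 1 := by linarith
  by_cases hcase : (T : ℝ) / (L + 1) - 1 ≤ 0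
  · refine le_trans ?_ (Finset.le_sup' _ (Finset.mem_Icc.mpr ⟨hT, le_rfl⟩))
    have hnn : (0:ℝ) ≤ ∑ i ∈ Finset.range T, a i / a T :=
      Finset.sum_nonneg fun i hi =>
        div_nonneg (hpos i (le_of_lt (Finset.mem_range.mp hi))).le haT.le
    have hepos : (0:ℝ) < 1 / Real.exp 1 := by positivity
    exact le_trans (mul_nonpos_of_nonneg_of_nonpos hepos.le hcase) hnn
  push_neg at hcase
  have hLT : L + 1 < T := by
    have h1 : (1:ℝ) < (T:ℝ) / (L + 1) := by linarith
    calc L + 1 = 1 * (L + 1) := by ring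
    _ < T := (lt_div_iff₀ hL1).mp h1
  set K := ⌊L⌋₊ with hK
  have hKL : (K:ℝ) ≤ L := Nat.floor_le hL0
  have hlognn : ∀ i ≤ T, 0 ≤ Real.log (a i / a 0) := by
    intro i hi
    apply Real.log_nonneg
    rw [le_div_iff₀ ha0]
    simpa using hmono 0 i (Nat.zero_le i) hi
  have hmaps : ∀ i ∈ Finset.Icc 0 T,
      ⌊Real.log (a i / a 0)⌋₊ ∈ Finset.range (K + 1) := by
    intro i hi
    rw [Finset.mem_range, Nat.lt_succ_iff]
    apply Nat.floor_le_floor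
    have hip := hpos i (Finset.mem_Icc.mp hi).2
    apply Real.log_le_log (div_pos hip ha0)
    gcongr
    exact hmono i T (Finset.mem_Icc.mp hi).2 le_rfl
  -- pigeonhole
  have hcard : (Finset.range (K + 1)).card * (T / (K + 1)) < (Finset.Icc 0 T).card := by
    rw [Finset.card_range, Nat.card_Icc]
    calc (K + 1) * (T / (K + 1)) ≤ T := Nat.mul_div_le T (K + 1)
    _ < T + 1 - 0 := by omega
  obtain ⟨k, hk, hklt⟩ :=
    Finset.exists_lt_card_fiber_of_mul_lt_card_of_maps_to hmaps hcard
  set F := (Finset.Icc 0 T).filter (fun i => ⌊Real.log (a i / a 0)⌋₊ = k) with hF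
  set m := F.card with hm
  have hTm : T < m * (K + 1) := (Nat.div_lt_iff_lt_mul (Nat.succ_pos K)).mp hklt
  have hm2 : 2 ≤ m := by
    by_contra h
    push_neg at h
    interval_cases m
    · omega
    · have hTK : T < K + 1 := by omega
      have : (T:ℝ) < (K:ℝ) + 1 := by exact_mod_cast hTK
      linarith
  have hFne : F.Nonempty := Finset.card_pos.mp (by omega)
  set t := F.max' hFne with ht
  have hmemF : ∀ i ∈ F, i ≤ T := fun i hi =>
    (Finset.mem_Icc.mp (Finset.mem_filter.mp hi).1).2
  have htT : t ≤ T := hmemF t (F.max'_mem hFne)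
  have ht1 : 1 ≤ t := by
    by_contra h
    push_neg at h
    have ht0 : t = 0 := by omega
    have : m ≤ 1 := Finset.card_le_one.mpr (by
      intro x hx y hy
      have hx0 : x = 0 := by have := F.le_max' x hx; omega
      have hy0 : y = 0 := by have := F.le_max' y hy; omega
      omega)
    omega
  -- per-element bound
  have hbound : ∀ i ∈ F, Real.exp (-1) ≤ a i / a t := by
    intro i hi
    have hiT := hmemF i hi
    have hip := hpos i hiT
    have htp := hpos t htT
    have hik : ⌊Real.log (a i / a 0)⌋₊ = k := (Finset.mem_filter.mp hi).2
    have htk : ⌊Real.log (a t / a 0)⌋₊ = k :=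
      (Finset.mem_filter.mp (F.max'_mem hFne)).2
    have h1 := (Nat.floor_eq_iff (hlognn i hiT)).mp hik
    have h2 := (Nat.floor_eq_iff (hlognn t htT)).mp htk
    have hlog : Real.log (a i / a t) =
        Real.log (a i / a 0) - Real.log (a t / a 0) := by
      rw [Real.log_div hip.ne' htp.ne', Real.log_div hip.ne' ha0.ne',
        Real.log_div htp.ne' ha0.ne']
      ring
    have : (-1:ℝ) ≤ Real.log (a i / a t) := by
      rw [hlog]
      push_cast at h1 h2
      linarith [h1.1, h1.2, h2.1, h2.2]
    calc Real.exp (-1) ≤ Real.exp (Real.log (a i / a t)) := Real.exp_le_exp.mpr this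
    _ = a i / a t := Real.exp_log (by positivity)
  -- sum bounds
  have hsub : F.erase t ⊆ Finset.range t := by
    intro i hi
    rw [Finset.mem_range]
    exact lt_of_le_of_ne (F.le_max' i (Finset.mem_of_mem_erase hi))
      (Finset.ne_of_mem_erase hi)
  have hsum1 : ∑ i ∈ F.erase t, a i / a t ≤ ∑ i ∈ Finset.range t, a i / a t := by
    apply Finset.sum_le_sum_of_subset_of_nonneg hsub
    intro i hi _
    have : i ≤ T := le_trans (le_of_lt (Finset.mem_range.mp hi)) htT
    exact div_nonneg (hpos i this).le (hpos t htT).le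
  have hcard_erase : (F.erase t).card = m - 1 :=
    Finset.card_erase_of_mem (F.max'_mem hFne)
  have hsum2 : ((m:ℝ) - 1) * Real.exp (-1) ≤ ∑ i ∈ F.erase t, a i / a t := by
    have := Finset.card_nsmul_le_sum (F.erase t) (fun i => a i / a t) (Real.exp (-1))
      (fun i hi => hbound i (Finset.mem_of_mem_erase hi))
    rw [hcard_erase, nsmul_eq_mul] at this
    have hcast : ((m - 1 : ℕ) : ℝ) = (m:ℝ) - 1 := by
      push_cast [Nat.cast_sub (by omega : 1 ≤ m)]; ring
    rwa [hcast] at this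
  -- final chain
  have hTlt : (T:ℝ) < m * (L + 1) := by
    have h1 : (T:ℝ) < m * ((K:ℝ) + 1) := by exact_mod_cast hTm
    have h2 : (m:ℝ) * ((K:ℝ) + 1) ≤ m * (L + 1) := by
      apply mul_le_mul_of_nonneg_left (by linarith) (by positivity)
    linarith
  have hdiv : (T:ℝ) / (L + 1) ≤ m := by
    rw [div_le_iff₀ hL1]
    linarith
  have hfinal : (1 / Real.exp 1) * ((T : ℝ) / (L + 1) - 1) ≤
      ∑ i ∈ Finset.range t, a i / a t := by
    have hexp : (1:ℝ) / Real.exp 1 = Real.exp (-1) := by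
      rw [Real.exp_neg]; ring
    calc (1 / Real.exp 1) * ((T : ℝ) / (L + 1) - 1)
        ≤ (1 / Real.exp 1) * ((m:ℝ) - 1) := by
          apply mul_le_mul_of_nonneg_left (by linarith) (by positivity)
    _ = ((m:ℝ) - 1) * Real.exp (-1) := by rw [hexp]; ring
    _ ≤ ∑ i ∈ F.erase t, a i / a t := hsum2
    _ ≤ ∑ i ∈ Finset.range t, a i / a t := hsum1
  exact le_trans hfinal (Finset.le_sup' (f := fun t => ∑ i ∈ Finset.range t, a i / a t)
    (Finset.mem_Icc.mpr ⟨ht1, htT⟩))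
end

section
/- Let a_{−1}, a₀, a₁, …, a_t be a nondecreasing sequence of positive real numbers. Then Σ_{k=0}^{t} (a_k − a_{k−1}) / ( a_k · log_+²(a_k / a_{−1}) ) ≤ 1. -/
open Finset

/-- The sequence `a 0, a 1, …, a (t+1)` plays the role of `a₋₁, a₀, …, a_t`. -/
theorem stmt11 (t : ℕ) (a : ℕ → ℝ)
    (hpos : ∀ k ≤ t + 1, 0 < a k)
    (hmono : ∀ i j, i ≤ j → j ≤ t + 1 → a i ≤ a j) :
    ∑ k ∈ Finset.range (t + 1),
        (a (k + 1) - a k) / (a (k + 1) * (Real.log (a (k + 1) / a 0) + 1) ^ 2) ≤ 1 := by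
  have h0 : 0 < a 0 := hpos 0 (by omega)
  set L : ℕ → ℝ := fun k => Real.log (a k / a 0) + 1 with hLdef
  have hL1 : ∀ k ≤ t + 1, 1 ≤ L k := by
    intro k hk
    have h1 : 1 ≤ a k / a 0 := (one_le_div h0).2 (hmono 0 k (Nat.zero_le _) hk)
    have := Real.log_nonneg h1
    simp only [hLdef]
    linarith
  have key : ∀ k ∈ Finset.range (t + 1),
      (a (k + 1) - a k) / (a (k + 1) * L (k + 1) ^ 2) ≤ (L k)⁻¹ - (L (k + 1))⁻¹ := by
    intro k hk
    simp only [Finset.mem_range] at hk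
    have hk' : k + 1 ≤ t + 1 := by omega
    have hak : 0 < a k := hpos k (by omega)
    have hak1 : 0 < a (k + 1) := hpos (k + 1) hk'
    have hmle : a k ≤ a (k + 1) := hmono k (k + 1) (by omega) hk'
    have hLk : 1 ≤ L k := hL1 k (by omega)
    have hLk1 : 1 ≤ L (k + 1) := hL1 (k + 1) hk'
    have hLle : L k ≤ L (k + 1) := by
      simp only [hLdef]
      have : Real.log (a k / a 0) ≤ Real.log (a (k+1) / a 0) :=
        Real.log_le_log (div_pos hak h0) (by gcongr)
      linarith
    have hdiff : L (k + 1) - L k = Real.log (a (k + 1) / a k) := by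
      simp only [hLdef]
      rw [Real.log_div hak1.ne' hak.ne', Real.log_div hak1.ne' h0.ne',
        Real.log_div hak.ne' h0.ne']
      ring
    have hlognn : 0 ≤ Real.log (a (k + 1) / a k) := by rw [← hdiff]; linarith
    have hstep1 : a (k + 1) - a k ≤ Real.log (a (k + 1) / a k) * a (k + 1) := by
      have hx : 0 < a k / a (k + 1) := div_pos hak hak1
      have hle := Real.log_le_sub_one_of_pos hx
      have hrw : Real.log (a k / a (k + 1)) = -Real.log (a (k + 1) / a k) := by
        rw [← Real.log_inv]
        congr 1
        field_simp
      rw [hrw] at hle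
      have h2 : 1 - a k / a (k + 1) ≤ Real.log (a (k + 1) / a k) := by linarith
      have := mul_le_mul_of_nonneg_right h2 hak1.le
      calc a (k + 1) - a k = (1 - a k / a (k + 1)) * a (k + 1) := by field_simp
        _ ≤ Real.log (a (k + 1) / a k) * a (k + 1) := this
    have hRHS : (L k)⁻¹ - (L (k + 1))⁻¹
        = Real.log (a (k + 1) / a k) / (L k * L (k + 1)) := by
      rw [← hdiff]
      field_simp
    rw [hRHS, div_le_div_iff₀ (by positivity) (by positivity)]
    have hLknn : (0:ℝ) ≤ L k := by linarith
    have hLk1nn : (0:ℝ) ≤ L (k + 1) := by linarith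
    calc (a (k + 1) - a k) * (L k * L (k + 1))
        ≤ Real.log (a (k + 1) / a k) * a (k + 1) * (L k * L (k + 1)) :=
          mul_le_mul_of_nonneg_right hstep1 (mul_nonneg hLknn hLk1nn)
      _ = Real.log (a (k + 1) / a k) * a (k + 1) * L k * L (k + 1) := by ring
      _ ≤ Real.log (a (k + 1) / a k) * a (k + 1) * L (k + 1) * L (k + 1) := by
          have := mul_le_mul_of_nonneg_left hLle
            (mul_nonneg hlognn hak1.le)
          have := mul_le_mul_of_nonneg_right this hLk1nn
          nlinarith [this]
      _ = Real.log (a (k + 1) / a k) * (a (k + 1) * L (k + 1) ^ 2) := by ring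
  calc ∑ k ∈ Finset.range (t + 1),
        (a (k + 1) - a k) / (a (k + 1) * (Real.log (a (k + 1) / a 0) + 1) ^ 2)
      = ∑ k ∈ Finset.range (t + 1),
        (a (k + 1) - a k) / (a (k + 1) * L (k + 1) ^ 2) := rfl
    _ ≤ ∑ k ∈ Finset.range (t + 1), ((L k)⁻¹ - (L (k + 1))⁻¹) :=
        Finset.sum_le_sum key
    _ = (L 0)⁻¹ - (L (t + 1))⁻¹ := Finset.sum_range_sub' (fun k => (L k)⁻¹) _
    _ ≤ 1 := by
        have hL0 : L 0 = 1 := by simp [hLdef, div_self h0.ne']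
        have : 0 < L (t + 1) := lt_of_lt_of_le one_pos (hL1 (t + 1) le_rfl)
        rw [hL0]
        simp
        positivity
end

section
/- Let d ≥ 1, let 0 ≤ L ≤ L̄ with L̄ > 0, let θ ≥ 1, s₀ ≥ 0, and let (g_k)_{k≥0} be vectors in ℝ^d with ‖g_k‖ ≤ Ld for all k. Let (r̄_k)_{k≥0} be a positive nondecreasing sequence, and let ζ ∈ ℕ ∪ {∞} be such that r̄_k ≤ 3 s₀ for all k < ζ. Define G_{−1} = 0, G_k = Σ_{i=0}^{k} ‖g_i‖², G'_k = 8⁴ θ (log(k+2)+1)² (G_{k−1} + 16 θ d² L̄²), and η̃_k = (r̄_k / √(G'_k)) · 1[k < ζ]. Then for every t ≥ 0: Σ_{k=0}^{t} η̃_k² ‖g_k‖² ≤ s₀² / 2. -/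
open Finset

set_option maxHeartbeats 1000000

private lemma aux_div15 (x y z w : ℝ) (hz : z ≠ 0) (hy : y ≠ 0) (hw : w ≠ 0) :
    x / (z * w * y) = 1 / z * (x / (y * w)) := by
  field_simp

theorem stmt15 (d : ℕ) (hd : 1 ≤ d) (L Lbar : ℝ) (hL : 0 ≤ L) (hLLbar : L ≤ Lbar)
    (hLbar : 0 < Lbar) (θ : ℝ) (hθ : 1 ≤ θ) (s0 : ℝ) (hs0 : 0 ≤ s0)
    (g : ℕ → EuclideanSpace ℝ (Fin d)) (hg : ∀ k, ‖g k‖ ≤ L * d)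
    (rbar : ℕ → ℝ) (hrpos : ∀ k, 0 < rbar k) (hrmono : Monotone rbar)
    (ζ : ℕ∞) (hζ : ∀ k : ℕ, (k : ℕ∞) < ζ → rbar k ≤ 3 * s0)
    (G' : ℕ → ℝ)
    (hG' : ∀ k : ℕ, G' k = 8 ^ 4 * θ * (Real.log ((k : ℝ) + 2) + 1) ^ 2 *
      ((∑ i ∈ Finset.range k, ‖g i‖ ^ 2) + 16 * θ * (d : ℝ) ^ 2 * Lbar ^ 2))
    (ηt : ℕ → ℝ)
    (hηt : ∀ k : ℕ, ηt k = if (k : ℕ∞) < ζ then rbar k / Real.sqrt (G' k) else 0)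
    (t : ℕ) :
    ∑ k ∈ Finset.range (t + 1), ηt k ^ 2 * ‖g k‖ ^ 2 ≤ s0 ^ 2 / 2 := by
  have hd1 : (1:ℝ) ≤ (d:ℝ) := by exact_mod_cast hd
  set C : ℝ := 16 * θ * (d : ℝ) ^ 2 * Lbar ^ 2 with hCdef
  have hCpos : 0 < C := by positivity
  have haC : ∀ k, ‖g k‖ ^ 2 ≤ C := by
    intro k
    have h1 : ‖g k‖ ≤ Lbar * d := (hg k).trans (by nlinarith)
    have h0 : 0 ≤ ‖g k‖ := norm_nonneg _
    have h2 : ‖g k‖ ^ 2 ≤ (Lbar * d) ^ 2 := by nlinarith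
    have h3 : (0:ℝ) ≤ (d:ℝ) ^ 2 * Lbar ^ 2 := by positivity
    nlinarith
  set T : ℕ → ℝ := fun k => (∑ i ∈ Finset.range k, ‖g i‖ ^ 2) + C with hTdef
  have hsum_nonneg : ∀ k, 0 ≤ ∑ i ∈ Finset.range k, ‖g i‖ ^ 2 :=
    fun k => Finset.sum_nonneg (fun i _ => sq_nonneg _)
  have hTpos : ∀ k, 0 < T k := by
    intro k; have := hsum_nonneg k; simp only [hTdef]; linarith
  have hTsucc : ∀ k, T (k+1) = T k + ‖g k‖ ^ 2 := by
    intro k; simp only [hTdef, Finset.sum_range_succ]; ring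
  have hTmono : ∀ k, T k ≤ T (k+1) := by
    intro k; have := sq_nonneg ‖g k‖; rw [hTsucc]; linarith
  have hCT : ∀ k, C ≤ T k := by
    intro k; have := hsum_nonneg k; simp only [hTdef]; linarith
  have hTle : ∀ k, T k ≤ ((k:ℝ) + 1) * C := by
    intro k
    have h := Finset.sum_le_card_nsmul (Finset.range k) (fun i => ‖g i‖ ^ 2) C
      (fun i _ => haC i)
    simp only [Finset.card_range, nsmul_eq_mul] at h
    simp only [hTdef]; linarith
  set v : ℕ → ℝ := fun k => Real.log (T k / C) + 1 with hvdef
  have hv0 : v 0 = 1 := by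
    have : T 0 = C := by simp [hTdef]
    simp [hvdef, this, div_self hCpos.ne']
  have hv1 : ∀ k, 1 ≤ v k := by
    intro k
    have : (1:ℝ) ≤ T k / C := (one_le_div hCpos).2 (hCT k)
    have := Real.log_nonneg this
    simp only [hvdef]; linarith
  have hvmono : ∀ k, v k ≤ v (k+1) := by
    intro k
    have h1 : T k / C ≤ T (k+1) / C := by
      apply div_le_div_of_nonneg_right (hTmono k) hCpos.le
    have := Real.log_le_log (by positivity) h1
    simp only [hvdef]; linarith
  have hvle : ∀ k : ℕ, v (k+1) ≤ Real.log ((k:ℝ) + 2) + 1 := by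
    intro k
    have h1 : T (k+1) / C ≤ (k:ℝ) + 2 := by
      rw [div_le_iff₀ hCpos]
      have := hTle (k+1)
      push_cast at this ⊢
      linarith
    have := Real.log_le_log (by positivity) h1
    simp only [hvdef]; linarith
  -- key inequality: a k / T(k+1) ≤ v(k+1) - v k
  have key1 : ∀ k, ‖g k‖ ^ 2 / T (k+1) ≤ v (k+1) - v k := by
    intro k
    have hx := hTpos (k+1); have hy := hTpos k
    have h1 : Real.log (T k / T (k+1)) ≤ T k / T (k+1) - 1 :=
      Real.log_le_sub_one_of_pos (by positivity)
    have h2 : Real.log (T k / T (k+1)) = Real.log (T k) - Real.log (T (k+1)) :=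
      Real.log_div hy.ne' hx.ne'
    have h3 : v (k+1) - v k = Real.log (T (k+1)) - Real.log (T k) := by
      simp only [hvdef]
      rw [Real.log_div hx.ne' hCpos.ne', Real.log_div hy.ne' hCpos.ne']
      ring
    have h4 : ‖g k‖ ^ 2 / T (k+1) = 1 - T k / T (k+1) := by
      have hx := hx.ne'
      field_simp
      linarith [hTsucc k]
    rw [h4, h3]; rw [h2] at h1; linarith
  have key2 : ∀ k, ‖g k‖ ^ 2 / (T (k+1) * v (k+1) ^ 2) ≤ 1 / v k - 1 / v (k+1) := by
    intro k
    have hp := hv1 k; have hq := hv1 (k+1); have hpq := hvmono k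
    have hT1 := hTpos (k+1)
    have h1 : ‖g k‖ ^ 2 ≤ (v (k+1) - v k) * T (k+1) := by
      have := key1 k
      rw [div_le_iff₀ hT1] at this; linarith
    have h2 : 1 / v k - 1 / v (k+1) = (v (k+1) - v k) / (v k * v (k+1)) := by
      rw [one_div, one_div, inv_sub_inv (by positivity) (by positivity)]
    rw [h2, div_le_div_iff₀ (by positivity) (by positivity)]
    have e1 : ‖g k‖ ^ 2 * (v k * v (k+1)) ≤
        ((v (k+1) - v k) * T (k+1)) * (v k * v (k+1)) :=
      mul_le_mul_of_nonneg_right h1 (by nlinarith)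
    have e2 : ((v (k+1) - v k) * T (k+1)) * (v k * v (k+1)) ≤
        ((v (k+1) - v k) * T (k+1)) * (v (k+1) * v (k+1)) := by
      apply mul_le_mul_of_nonneg_left (by nlinarith)
      have := sub_nonneg.2 hpq
      nlinarith
    nlinarith [e1, e2]
  -- per-term bound
  have hterm : ∀ k, ηt k ^ 2 * ‖g k‖ ^ 2 ≤
      9 * s0 ^ 2 / (2048 * θ) * (1 / v k - 1 / v (k+1)) := by
    intro k
    have hvdiff : 0 ≤ 1 / v k - 1 / v (k+1) := by
      have hp := hv1 k; have hq := hv1 (k+1); have hpq := hvmono k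
      have : 1 / v (k+1) ≤ 1 / v k := one_div_le_one_div_of_le (by linarith) hpq
      linarith
    rw [hηt k]
    by_cases hk : (k : ℕ∞) < ζ
    · rw [if_pos hk]
      have hr3 := hζ k hk
      have hrp := hrpos k
      have hG'eq : G' k = 4096 * θ * (Real.log ((k:ℝ) + 2) + 1) ^ 2 * T k := by
        rw [hG' k]; simp only [hTdef]; norm_num
      have hw1 : (1:ℝ) ≤ Real.log ((k:ℝ) + 2) + 1 := by
        have : (0:ℝ) ≤ Real.log ((k:ℝ)+2) := Real.log_nonneg (by push_cast; linarith)
        linarith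
      have hG'pos : 0 < G' k := by
        rw [hG'eq]
        have := hTpos k
        positivity
      have hη2 : (rbar k / Real.sqrt (G' k)) ^ 2 = rbar k ^ 2 / G' k := by
        rw [div_pow, Real.sq_sqrt hG'pos.le]
      rw [hη2]
      -- G' k ≥ 2048 θ v(k+1)² T(k+1)
      have hG'ge : 2048 * θ * v (k+1) ^ 2 * T (k+1) ≤ G' k := by
        rw [hG'eq]
        have hw := hvle k
        have hq := hv1 (k+1)
        have hTk := hTpos k
        have hT2 : T (k+1) ≤ 2 * T k := by
          rw [hTsucc k]
          have := haC k; have := hCT k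
          linarith
        have hθ0 : (0:ℝ) < θ := by linarith
        have hsq : v (k+1) ^ 2 ≤ (Real.log ((k:ℝ) + 2) + 1) ^ 2 := by
          nlinarith
        have e1 : 2048 * θ * v (k+1) ^ 2 * T (k+1) ≤
            2048 * θ * v (k+1) ^ 2 * (2 * T k) :=
          mul_le_mul_of_nonneg_left hT2 (by nlinarith [sq_nonneg (v (k+1))])
        have e2 : 4096 * θ * v (k+1) ^ 2 * T k ≤
            4096 * θ * (Real.log ((k:ℝ) + 2) + 1) ^ 2 * T k := by
          apply mul_le_mul_of_nonneg_right _ hTk.le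
          exact mul_le_mul_of_nonneg_left hsq (by linarith)
        nlinarith [e1, e2]
      have hdenpos : (0:ℝ) < 2048 * θ * v (k+1) ^ 2 * T (k+1) := by
        have := hv1 (k+1); have := hTpos (k+1); positivity
      have h6 : ‖g k‖ ^ 2 / G' k ≤ ‖g k‖ ^ 2 / (2048 * θ * v (k+1) ^ 2 * T (k+1)) :=
        div_le_div_of_nonneg_left (sq_nonneg _) hdenpos hG'ge
      have h7 : ‖g k‖ ^ 2 / (2048 * θ * v (k+1) ^ 2 * T (k+1)) =
          1 / (2048 * θ) * (‖g k‖ ^ 2 / (T (k+1) * v (k+1) ^ 2)) :=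
        aux_div15 _ _ _ _ (by positivity) (hTpos (k+1)).ne'
          (by have := hv1 (k+1); positivity)
      have h8 : ‖g k‖ ^ 2 / G' k ≤ 1 / (2048 * θ) * (1 / v k - 1 / v (k+1)) := by
        rw [h7] at h6
        refine h6.trans ?_
        have hθ0 : (0:ℝ) < θ := by linarith
        have := key2 k
        have h1θ : (0:ℝ) ≤ 1 / (2048 * θ) := by positivity
        exact mul_le_mul_of_nonneg_left this h1θ
      have h9 : rbar k ^ 2 ≤ 9 * s0 ^ 2 := by nlinarith
      calc rbar k ^ 2 / G' k * ‖g k‖ ^ 2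
          = rbar k ^ 2 * (‖g k‖ ^ 2 / G' k) := by ring
        _ ≤ 9 * s0 ^ 2 * (1 / (2048 * θ) * (1 / v k - 1 / v (k+1))) := by
            apply mul_le_mul h9 h8 (by positivity) (by positivity)
        _ = 9 * s0 ^ 2 / (2048 * θ) * (1 / v k - 1 / v (k+1)) := by ring
    · rw [if_neg hk]
      have hθ0 : (0:ℝ) < θ := by linarith
      have : 0 ≤ 9 * s0 ^ 2 / (2048 * θ) := by positivity
      nlinarith
  calc ∑ k ∈ Finset.range (t + 1), ηt k ^ 2 * ‖g k‖ ^ 2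
      ≤ ∑ k ∈ Finset.range (t + 1),
          9 * s0 ^ 2 / (2048 * θ) * (1 / v k - 1 / v (k+1)) :=
        Finset.sum_le_sum (fun k _ => hterm k)
    _ = 9 * s0 ^ 2 / (2048 * θ) * ∑ k ∈ Finset.range (t + 1), (1 / v k - 1 / v (k+1)) := by
        rw [Finset.mul_sum]
    _ = 9 * s0 ^ 2 / (2048 * θ) * (1 / v 0 - 1 / v (t+1)) := by
        rw [Finset.sum_range_sub' (fun k => 1 / v k)]
    _ ≤ 9 * s0 ^ 2 / (2048 * θ) * 1 := by
        have hθ0 : (0:ℝ) < θ := by linarith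
        have h1 : 0 ≤ 1 / v (t+1) := by have := hv1 (t+1); positivity
        have h2 : 1 / v 0 - 1 / v (t+1) ≤ 1 := by
          rw [hv0]
          have e : (1:ℝ)/1 = 1 := by norm_num
          rw [e]; linarith
        exact mul_le_mul_of_nonneg_left h2 (by positivity)
    _ ≤ s0 ^ 2 / 2 := by
        rw [mul_one]
        have h1 : 9 * s0 ^ 2 / (2048 * θ) ≤ 9 * s0 ^ 2 / 2048 := by
          apply div_le_div_of_nonneg_left (by positivity) (by norm_num) (by linarith)
        nlinarith
end

section
/- Let d ≥ 1, L ≥ 0, let f : ℝ^d → ℝ be convex and L-Lipschitz with respect to the Euclidean norm, let μ > 0, and let x, x★ ∈ ℝ^d satisfy f(x★) ≤ f(x). Then ⟨∇f_μ(x), x★ − x⟩ ≤ 2 L μ. -/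
open MeasureTheory Metric Finset
open scoped RealInnerProductSpace

section aux
variable {d : ℕ} {L : ℝ} {f : EuclideanSpace ℝ (Fin d) → ℝ} {μ : ℝ}

lemma prob_ball (d : ℕ) : IsProbabilityMeasure (ballUniform d) := by
  have h1 : volume (Metric.closedBall (0 : EuclideanSpace ℝ (Fin d)) 1) ≠ 0 :=
    (measure_closedBall_pos volume (0:EuclideanSpace ℝ (Fin d)) one_pos).ne'
  have h2 : volume (Metric.closedBall (0 : EuclideanSpace ℝ (Fin d)) 1) ≠ ⊤ :=
    measure_closedBall_lt_top.ne
  constructor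
  simp [ballUniform, Measure.smul_apply, Measure.restrict_apply, smul_eq_mul,
    ENNReal.inv_mul_cancel h1 h2]

lemma cont_aux (hL : 0 ≤ L) (hlip : ∀ x y, |f x - f y| ≤ L * ‖x - y‖) :
    Continuous f := by
  have : LipschitzWith ⟨L, hL⟩ f := by
    apply LipschitzWith.of_dist_le_mul
    intro a b
    rw [Real.dist_eq, dist_eq_norm]
    exact hlip a b
  exact this.continuous

lemma integ_aux (hL : 0 ≤ L) (hlip : ∀ x y, |f x - f y| ≤ L * ‖x - y‖)
    (x : EuclideanSpace ℝ (Fin d)) :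
    Integrable (fun u => f (x + μ • u)) (ballUniform d) := by
  rw [ballUniform]
  refine Integrable.smul_measure ?_ ?_
  · exact (((cont_aux hL hlip).comp
      (continuous_const.add (continuous_id.const_smul μ))).continuousOn).integrableOn_compact
      (isCompact_closedBall _ _)
  · simp [(measure_closedBall_pos volume (0:EuclideanSpace ℝ (Fin d)) one_pos).ne']

lemma smoothed_convex (hL : 0 ≤ L) (hconv : ConvexOn ℝ Set.univ f)
    (hlip : ∀ x y, |f x - f y| ≤ L * ‖x - y‖) :
    ConvexOn ℝ Set.univ (smoothed d f μ) := by
  refine ⟨convex_univ, fun x _ y _ a b ha hb hab => ?_⟩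
  have hix := integ_aux hL hlip (μ := μ) x
  have hiy := integ_aux hL hlip (μ := μ) y
  have key : smoothed d f μ (a • x + b • y)
      ≤ ∫ u, (a * f (x + μ • u) + b * f (y + μ • u)) ∂(ballUniform d) := by
    refine integral_mono (integ_aux hL hlip _) ((hix.const_mul a).add (hiy.const_mul b)) ?_
    intro u
    have h1 : a • x + b • y + μ • u = a • (x + μ • u) + b • (y + μ • u) := by
      rw [smul_add, smul_add, add_add_add_comm, ← add_smul, hab, one_smul]
    simp only
    rw [h1]
    simpa using hconv.2 (Set.mem_univ (x + μ • u)) (Set.mem_univ (y + μ • u)) ha hb hab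
  calc smoothed d f μ (a • x + b • y) ≤ _ := key
    _ = a * smoothed d f μ x + b * smoothed d f μ y := by
        rw [integral_add (hix.const_mul a) (hiy.const_mul b),
          integral_const_mul, integral_const_mul]; rfl
    _ = a • smoothed d f μ x + b • smoothed d f μ y := rfl

lemma smoothed_close (hL : 0 ≤ L) (hlip : ∀ x y, |f x - f y| ≤ L * ‖x - y‖)
    (hμ : 0 < μ) (y : EuclideanSpace ℝ (Fin d)) :
    |smoothed d f μ y - f y| ≤ L * μ := by
  haveI := prob_ball d
  have hint := integ_aux hL hlip (μ := μ) y
  have h1 : smoothed d f μ y - f y = ∫ u, (f (y + μ • u) - f y) ∂(ballUniform d) := by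
    rw [integral_sub hint (integrable_const _), integral_const]
    simp [smoothed]
  rw [h1]
  have hae : ∀ᵐ u ∂(ballUniform d), |f (y + μ • u) - f y| ≤ L * μ := by
    rw [ballUniform]
    refine Measure.ae_smul_measure ?_ _
    filter_upwards [ae_restrict_mem measurableSet_closedBall] with u hu
    have hu1 : ‖u‖ ≤ 1 := by simpa [Metric.mem_closedBall, dist_zero_right] using hu
    calc |f (y + μ • u) - f y| ≤ L * ‖(y + μ • u) - y‖ := hlip _ _
      _ = L * (μ * ‖u‖) := by
          rw [add_sub_cancel_left, norm_smul, Real.norm_eq_abs, abs_of_pos hμ]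
      _ ≤ L * μ := by nlinarith [mul_nonneg hL hμ.le]
  calc |∫ u, (f (y + μ • u) - f y) ∂(ballUniform d)|
      ≤ ∫ u, |f (y + μ • u) - f y| ∂(ballUniform d) := by
        simpa [Real.norm_eq_abs] using
          norm_integral_le_integral_norm (μ := ballUniform d)
            (f := fun u => f (y + μ • u) - f y)
    _ ≤ ∫ _u, L * μ ∂(ballUniform d) :=
        integral_mono_ae (hint.sub (integrable_const _)).abs (integrable_const _) hae
    _ = L * μ := by simp

end aux

theorem stmt16 (d : ℕ) (hd : 1 ≤ d) (L : ℝ) (hL : 0 ≤ L)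
    (f : EuclideanSpace ℝ (Fin d) → ℝ)
    (hconv : ConvexOn ℝ Set.univ f)
    (hlip : ∀ x y, |f x - f y| ≤ L * ‖x - y‖)
    (μ : ℝ) (hμ : 0 < μ)
    (x xstar : EuclideanSpace ℝ (Fin d)) (hmin : f xstar ≤ f x) :
    ⟪gradient (smoothed d f μ) x, xstar - x⟫ ≤ 2 * L * μ := by
  set g := smoothed d f μ with hg
  by_cases hdiff : DifferentiableAt ℝ g x
  · set v := xstar - x with hv
    have hgconv : ConvexOn ℝ Set.univ g := smoothed_convex hL hconv hlip
    have hfd : HasFDerivAt g (InnerProductSpace.toDual ℝ _ (gradient g x)) x :=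
      hdiff.hasGradientAt.hasFDerivAt
    -- directional derivative bound
    have hline : HasDerivAt (fun t : ℝ => x + t • v) v 0 := by
      simpa using ((hasDerivAt_id (0:ℝ)).smul_const v).const_add x
    have hφ : HasDerivAt (fun t : ℝ => g (x + t • v)) ⟪gradient g x, v⟫ 0 := by
      have hfd' : HasFDerivAt g (InnerProductSpace.toDual ℝ _ (gradient g x))
          (x + (0:ℝ) • v) := by simpa using hfd
      have := hfd'.comp_hasDerivAt 0 hline
      rw [InnerProductSpace.toDual_apply_apply] at this
      exact this
    have hslope : Filter.Tendsto (slope (fun t : ℝ => g (x + t • v)) 0)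
        (nhdsWithin 0 (Set.Ioi 0)) (nhds ⟪gradient g x, v⟫) :=
      (hasDerivAt_iff_tendsto_slope.1 hφ).mono_left
        (nhdsWithin_mono 0 (fun t ht => ne_of_gt ht))
    have hdirle : ⟪gradient g x, v⟫ ≤ g (x + v) - g x := by
      refine le_of_tendsto hslope ?_
      filter_upwards [Ioc_mem_nhdsGT_of_mem (Set.mem_Ico.2 ⟨le_refl (0:ℝ), one_pos⟩)]
        with t ht
      obtain ⟨ht0, ht1⟩ := ht
      have hcvx := hgconv.2 (Set.mem_univ x) (Set.mem_univ (x + v))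
        (show (0:ℝ) ≤ 1 - t by linarith) (le_of_lt ht0) (by ring)
      have hpt : (1 - t) • x + t • (x + v) = x + t • v := by module
      rw [hpt] at hcvx
      simp only [smul_eq_mul] at hcvx
      rw [slope_def_field]
      rw [sub_zero, div_le_iff₀ ht0]
      simp only [zero_smul, add_zero]
      nlinarith [hcvx]
    -- closeness bounds
    have hclose1 := smoothed_close hL hlip hμ xstar
    have hclose2 := smoothed_close hL hlip hμ x
    have h1 : g xstar ≤ f xstar + L * μ := by
      have := abs_le.1 hclose1
      rw [← hg] at this
      linarith [this.2]
    have h2 : f x - L * μ ≤ g x := by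
      have := abs_le.1 hclose2
      rw [← hg] at this
      linarith [this.1]
    have hxv : x + v = xstar := by rw [hv]; abel
    rw [hxv] at hdirle
    linarith
  · rw [gradient_eq_zero_of_not_differentiableAt hdiff]
    simp only [inner_zero_left]
    positivity
end
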